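/- For nonnegative integers b and n with n/6 ≤ b < n/4, the graph S_{b,n} has exactly b²(n-4b) triangles. -/

import Mathlib

open Finset SimpleGraph

/-- Adjacency of the 3-prism graph: two triangles `{(s,0),(s,1),(s,2)}` for `s : Fin 2`,
with a perfect matching between vertices with the same second coordinate. -/
def prismAdj (p q : Fin 2 × Fin 3) : Prop :=
  (p.1 = q.1 ∧ p.2 ≠ q.2) ∨ (p.1 ≠ q.1 ∧ p.2 = q.2)

/-- The sizes of the six parts of `S_{b,n}`: four parts of size `b` and two parts of
size `⌊(n-4b)/2⌋` and `⌈(n-4b)/2⌉`. -/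
def prismPartSize (b n : ℕ) (p : Fin 2 × Fin 3) : ℕ :=
  if p.2 = 2 then (if p.1 = 0 then (n - 4 * b) / 2 else (n - 4 * b) - (n - 4 * b) / 2) else b

/-- The graph `S_{b,n}`, the blow-up of the 3-prism graph. -/
def SGraph (b n : ℕ) : SimpleGraph (Σ p : Fin 2 × Fin 3, Fin (prismPartSize b n p)) where
  Adj x y := prismAdj x.1 y.1
  symm := by
    constructor
    rintro x y (⟨h1, h2⟩ | ⟨h1, h2⟩)
    · exact Or.inl ⟨h1.symm, fun h => h2 h.symm⟩
    · exact Or.inr ⟨fun h => h1 h.symm, h2.symm⟩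
  loopless := by
    constructor
    rintro x (⟨_, h⟩ | ⟨h, _⟩) <;> exact h rfl

instance (b n : ℕ) : DecidableRel (SGraph b n).Adj := fun x y =>
  decidable_of_iff ((x.1.1 = y.1.1 ∧ x.1.2 ≠ y.1.2) ∨ (x.1.1 ≠ y.1.1 ∧ x.1.2 = y.1.2)) Iff.rfl

lemma prism_tri : ∀ p q r : Fin 2 × Fin 3, prismAdj p q → prismAdj p r → prismAdj q r →
    p.1 = q.1 ∧ p.1 = r.1 ∧ p.2 ≠ q.2 ∧ p.2 ≠ r.2 ∧ q.2 ≠ r.2 := by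
  have : ∀ p q r : Fin 2 × Fin 3,
      ((p.1 = q.1 ∧ p.2 ≠ q.2) ∨ (p.1 ≠ q.1 ∧ p.2 = q.2)) →
      ((p.1 = r.1 ∧ p.2 ≠ r.2) ∨ (p.1 ≠ r.1 ∧ p.2 = r.2)) →
      ((q.1 = r.1 ∧ q.2 ≠ r.2) ∨ (q.1 ≠ r.1 ∧ q.2 = r.2)) →
      p.1 = q.1 ∧ p.1 = r.1 ∧ p.2 ≠ q.2 ∧ p.2 ≠ r.2 ∧ q.2 ≠ r.2 := by decide
  exact this

abbrev TriIdx (b n : ℕ) := Σ s : Fin 2, Fin b × Fin b × Fin (prismPartSize b n (s, 2))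

def triMap (b n : ℕ) (a : TriIdx b n) : Finset (Σ p : Fin 2 × Fin 3, Fin (prismPartSize b n p)) :=
  {⟨(a.1, 0), a.2.1⟩, ⟨(a.1, 1), a.2.2.1⟩, ⟨(a.1, 2), a.2.2.2⟩}

lemma tri_comm1 {α : Type*} [DecidableEq α] (x y z : α) : ({x, y, z} : Finset α) = {y, x, z} :=
  Finset.insert_comm x y {z}
lemma tri_comm2 {α : Type*} [DecidableEq α] (x y z : α) : ({x, y, z} : Finset α) = {x, z, y} := by
  rw [Finset.pair_comm y z]

lemma triMap_mem (b n : ℕ) (a : TriIdx b n) : triMap b n a ∈ (SGraph b n).cliqueFinset 3 := by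
  obtain ⟨s, x, y, z⟩ := a
  have h : prismAdj (s,0) (s,1) ∧ prismAdj (s,0) (s,2) ∧ prismAdj (s,1) (s,2) := by
    refine ⟨Or.inl ⟨rfl, ?_⟩, Or.inl ⟨rfl, ?_⟩, Or.inl ⟨rfl, ?_⟩⟩ <;> simp
  rw [mem_cliqueFinset_iff]
  constructor
  · intro u hu v hv huv
    simp only [triMap, coe_insert, coe_singleton, Set.mem_insert_iff,
      Set.mem_singleton_iff] at hu hv
    rcases hu with rfl | rfl | rfl <;> rcases hv with rfl | rfl | rfl <;>
      first
      | exact absurd rfl huv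
      | exact h.1 | exact h.2.1 | exact h.2.2
      | exact (SGraph b n).adj_symm h.1 | exact (SGraph b n).adj_symm h.2.1
      | exact (SGraph b n).adj_symm h.2.2
  · simp only [triMap]
    rw [card_insert_of_notMem, card_insert_of_notMem, card_singleton] <;> simp [Sigma.ext_iff]

lemma triMap_inj (b n : ℕ) : Function.Injective (triMap b n) := by
  rintro ⟨s, x, y, z⟩ ⟨s', x', y', z'⟩ h
  have h0 : (⟨(s, 0), x⟩ : Σ p, Fin (prismPartSize b n p)) ∈ triMap b n ⟨s', x', y', z'⟩ := by
    rw [← h]; simp [triMap]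
  have h1 : (⟨(s, 1), y⟩ : Σ p, Fin (prismPartSize b n p)) ∈ triMap b n ⟨s', x', y', z'⟩ := by
    rw [← h]; simp [triMap]
  have h2 : (⟨(s, 2), z⟩ : Σ p, Fin (prismPartSize b n p)) ∈ triMap b n ⟨s', x', y', z'⟩ := by
    rw [← h]; simp [triMap]
  simp only [triMap, mem_insert, mem_singleton, Sigma.ext_iff, Prod.mk.injEq] at h0 h1 h2
  obtain ⟨⟨hs, -⟩, hx⟩ | ⟨⟨-, h01⟩, -⟩ | ⟨⟨-, h02⟩, -⟩ := h0
  rotate_left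
  · exact absurd h01 (by decide)
  · exact absurd h02 (by decide)
  obtain ⟨⟨-, h10⟩, -⟩ | ⟨⟨-, -⟩, hy⟩ | ⟨⟨-, h12⟩, -⟩ := h1
  · exact absurd h10 (by decide)
  rotate_left
  · exact absurd h12 (by decide)
  obtain ⟨⟨-, h20⟩, -⟩ | ⟨⟨-, h21⟩, -⟩ | ⟨⟨-, -⟩, hz⟩ := h2
  · exact absurd h20 (by decide)
  · exact absurd h21 (by decide)
  subst hs
  replace hx := eq_of_heq hx; replace hy := eq_of_heq hy; replace hz := eq_of_heq hz
  subst hx; subst hy; subst hz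
  rfl

lemma triMap_surj (b n : ℕ) (t : Finset (Σ p : Fin 2 × Fin 3, Fin (prismPartSize b n p)))
    (ht : t ∈ (SGraph b n).cliqueFinset 3) : ∃ a : TriIdx b n, triMap b n a = t := by
  rw [mem_cliqueFinset_iff] at ht
  obtain ⟨u, v, w, huv, huw, hvw, rfl⟩ := card_eq_three.mp ht.2
  have hC := ht.1
  have hu : u ∈ (({u, v, w} : Finset _) : Set _) := by simp
  have hv : v ∈ (({u, v, w} : Finset _) : Set _) := by simp
  have hw : w ∈ (({u, v, w} : Finset _) : Set _) := by simp
  have auv : prismAdj u.1 v.1 := hC hu hv huv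
  have auw : prismAdj u.1 w.1 := hC hu hw huw
  have avw : prismAdj v.1 w.1 := hC hv hw hvw
  obtain ⟨e1, e2, d1, d2, d3⟩ := prism_tri u.1 v.1 w.1 auv auw avw
  obtain ⟨⟨su, iu⟩, xu⟩ := u
  obtain ⟨⟨sv, iv⟩, xv⟩ := v
  obtain ⟨⟨sw, iw⟩, xw⟩ := w
  simp only at e1 e2 d1 d2 d3
  subst e1; subst e2
  have hcases : (iu = 0 ∧ iv = 1 ∧ iw = 2) ∨ (iu = 0 ∧ iv = 2 ∧ iw = 1) ∨
      (iu = 1 ∧ iv = 0 ∧ iw = 2) ∨ (iu = 1 ∧ iv = 2 ∧ iw = 0) ∨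
      (iu = 2 ∧ iv = 0 ∧ iw = 1) ∨ (iu = 2 ∧ iv = 1 ∧ iw = 0) := by
    have l1 := iu.is_lt; have l2 := iv.is_lt; have l3 := iw.is_lt
    simp only [ne_eq, Fin.ext_iff] at d1 d2 d3 ⊢
    omega
  rcases hcases with ⟨h1,h2,h3⟩|⟨h1,h2,h3⟩|⟨h1,h2,h3⟩|⟨h1,h2,h3⟩|⟨h1,h2,h3⟩|⟨h1,h2,h3⟩ <;>
    subst h1 <;> subst h2 <;> subst h3
  · exact ⟨⟨su, xu, xv, xw⟩, rfl⟩
  · exact ⟨⟨su, xu, xw, xv⟩, tri_comm2 _ _ _⟩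
  · exact ⟨⟨su, xv, xu, xw⟩, tri_comm1 _ _ _⟩
  · exact ⟨⟨su, xw, xu, xv⟩, (tri_comm1 _ _ _).trans (tri_comm2 _ _ _)⟩
  · exact ⟨⟨su, xv, xw, xu⟩, (tri_comm2 _ _ _).trans (tri_comm1 _ _ _)⟩
  · exact ⟨⟨su, xw, xv, xu⟩,
      ((tri_comm2 _ _ _).trans (tri_comm1 _ _ _)).trans (tri_comm2 _ _ _)⟩

/-- For nonnegative integers `b` and `n` with `n/6 ≤ b < n/4`, the graph `S_{b,n}` has
exactly `b²(n - 4b)` triangles. -/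
theorem SGraph_triangle_card (b n : ℕ) (h1 : (n : ℝ) / 6 ≤ b) (h2 : (b : ℝ) < n / 4) :
    ((SGraph b n).cliqueFinset 3).card = b ^ 2 * (n - 4 * b) := by
  have hcard : ((SGraph b n).cliqueFinset 3).card = Fintype.card (TriIdx b n) := by
    rw [← Finset.card_univ]
    exact (Finset.card_bij (fun a _ => triMap b n a) (fun a _ => triMap_mem b n a)
      (fun a _ a' _ h => triMap_inj b n h) (fun t ht => by
        obtain ⟨a, ha⟩ := triMap_surj b n t ht; exact ⟨a, mem_univ a, ha⟩)).symm
  rw [hcard]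
  simp only [TriIdx, Fintype.card_sigma, Fintype.card_prod, Fintype.card_fin, Fin.sum_univ_two]
  have hp0 : prismPartSize b n (0, 2) = (n - 4 * b) / 2 := rfl
  have hp1 : prismPartSize b n (1, 2) = (n - 4 * b) - (n - 4 * b) / 2 := rfl
  rw [hp0, hp1]
  set m := n - 4 * b with hm
  have hsum : m / 2 + (m - m / 2) = m := by omega
  calc b * (b * (m / 2)) + b * (b * (m - m / 2)) = b ^ 2 * (m / 2 + (m - m / 2)) := by ring
    _ = b ^ 2 * m := by rw [hsum]
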